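/- Let g ≥ 2 be an integer and p a prime with gcd(p, g) = 1. Then there is no constant C such that every bounded subset B ⊆ ℤ (with respect to the word metric d_g) has μ_p^{-1}(B) bounded, where μ_p(k) = p·k. In particular, multiplication by p is not a coarse equivalence of (ℤ, d_g). -/

import Mathlib

/-- The generating set `S_g = {± g^k : k ∈ ℕ}` in `ℤ`. -/
def Sg (g : ℤ) : Set ℤ := {x | ∃ n : ℕ, x = g ^ n ∨ x = -g ^ n}

/-- The word length of `k` with respect to `S_g`. -/
noncomputable def wlen (g : ℤ) (k : ℤ) : ℕ :=
  sInf {m | ∃ l : List ℤ, (∀ x ∈ l, x ∈ Sg g) ∧ l.length = m ∧ l.sum = k}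

/-- The word metric `d_g(m,n) = ℓ_g(m - n)`. -/
noncomputable def dg (g : ℤ) (m n : ℤ) : ℕ := wlen g (m - n)

/-- A subset of `ℤ` is bounded for `d_g` if it has finite `d_g`-diameter. -/
def DgBounded (g : ℤ) (B : Set ℤ) : Prop :=
  ∃ C : ℕ, ∀ x ∈ B, ∀ y ∈ B, dg g x y ≤ C

lemma wlen_le (g k : ℤ) (l : List ℤ) (h1 : ∀ x ∈ l, x ∈ Sg g) (h2 : l.sum = k) :
    wlen g k ≤ l.length :=
  Nat.sInf_le ⟨l, h1, rfl, h2⟩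

lemma wlen_spec (g k : ℤ) :
    ∃ l : List ℤ, (∀ x ∈ l, x ∈ Sg g) ∧ l.length = wlen g k ∧ l.sum = k := by
  have hne : {m | ∃ l : List ℤ, (∀ x ∈ l, x ∈ Sg g) ∧ l.length = m ∧ l.sum = k}.Nonempty := by
    rcases le_or_gt 0 k with h | h
    · refine ⟨k.natAbs, List.replicate k.natAbs 1, fun x hx => ?_, by simp, ?_⟩
      · rw [List.eq_of_mem_replicate hx]; exact ⟨0, Or.inl (by simp)⟩
      · simp only [List.sum_replicate, nsmul_eq_mul, mul_one]; omega
    · refine ⟨k.natAbs, List.replicate k.natAbs (-1), fun x hx => ?_, by simp, ?_⟩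
      · rw [List.eq_of_mem_replicate hx]; exact ⟨0, Or.inr (by simp)⟩
      · simp only [List.sum_replicate, nsmul_eq_mul, mul_neg, mul_one]; omega
  exact Nat.sInf_mem hne

lemma split_sum (B b : ℤ) (hb : 0 ≤ b) :
    ∀ l : List ℤ, (∀ x ∈ l, |x| ≤ b ∨ B ∣ x) →
    ∃ s : ℤ, B ∣ (l.sum - s) ∧ |s| ≤ l.length * b := by
  intro l
  induction l with
  | nil => intro _; exact ⟨0, by simp, by simp⟩
  | cons x l ih =>
    intro h
    obtain ⟨s, hs1, hs2⟩ := ih (fun y hy => h y (List.mem_cons_of_mem _ hy))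
    rcases h x List.mem_cons_self with hx | hx
    · refine ⟨x + s, by simpa using hs1, ?_⟩
      calc |x + s| ≤ |x| + |s| := abs_add_le _ _
        _ ≤ b + l.length * b := add_le_add hx hs2
        _ = ((x :: l).length : ℤ) * b := by simp; ring
    · refine ⟨s, ?_, ?_⟩
      · have : (x :: l).sum - s = x + (l.sum - s) := by simp; ring
        rw [this]; exact dvd_add hx hs1
      · calc |s| ≤ (l.length : ℤ) * b := hs2
          _ ≤ ((x :: l).length : ℤ) * b := by
              have : (l.length : ℤ) ≤ ((x::l).length : ℤ) := by simp
              exact mul_le_mul_of_nonneg_right this hb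

lemma wlen_lb (g : ℤ) (hg : 2 ≤ g) (k : ℤ) (T : ℕ)
    (N : Fin T → ℕ) (r : Fin T → ℤ)
    (hNlb : ∀ j, T + 1 ≤ N j)
    (hNgap : ∀ j j' : Fin T, j < j' → N j + T ≤ N j')
    (hmod : ∀ j, (g : ℤ) ^ (N j) ∣ k - r j)
    (hrlb : ∀ j, g ^ (N j - 2) < r j)
    (hrub : ∀ j, r j + g ^ (N j - 2) < g ^ (N j)) :
    T ≤ wlen g k := by
  by_contra hlt
  push_neg at hlt
  obtain ⟨l, hl, hlen, hsum⟩ := wlen_spec g k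
  have hm : l.length < T := by omega
  have hg1 : (1:ℤ) < g := by linarith
  have hgpos : (0:ℤ) < g := by linarith
  -- per-level existence
  have hP : ∀ j : Fin T, ∃ i : Fin l.length,
      g ^ (N j - T) ≤ |l.get i| ∧ |l.get i| < g ^ (N j) := by
    intro j
    by_contra hno
    push_neg at hno
    have hT1 : 1 ≤ T := by omega
    set a := N j - T with ha
    have ha1 : 1 ≤ a := by have := hNlb j; omega
    -- every element is small or divisible
    have hsplit : ∀ x ∈ l, |x| ≤ g ^ (a - 1) ∨ (g:ℤ) ^ (N j) ∣ x := by
      intro x hx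
      obtain ⟨e, he⟩ := hl x hx
      have habs : |x| = g ^ e := by
        rcases he with he | he <;> rw [he] <;>
          simp [abs_of_nonneg (le_of_lt (pow_pos hgpos e)), abs_neg]
      rcases le_or_gt ((g:ℤ) ^ a) (|x|) with hbig | hsmall
      · -- then g^(N j) ≤ |x|, so N j ≤ e, so divisible
        obtain ⟨i, hi⟩ := List.mem_iff_get.mp hx
        have hbig' : g ^ (N j) ≤ |l.get i| := hno i (by rw [hi]; exact hbig)
        rw [hi, habs] at hbig'
        have : N j ≤ e := by
          by_contra hc
          push_neg at hc
          exact absurd hbig' (not_le.mpr (pow_lt_pow_right₀ hg1 hc))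
        right
        have hd : (g:ℤ) ^ (N j) ∣ g ^ e := pow_dvd_pow g this
        rcases he with he | he <;> rw [he]
        · exact hd
        · exact (dvd_neg).mpr hd
      · left
        rw [habs] at hsmall ⊢
        have : e < a := by
          by_contra hc
          push_neg at hc
          exact absurd hsmall (not_lt.mpr (pow_le_pow_right₀ (by linarith) hc))
        have : e ≤ a - 1 := by omega
        exact pow_le_pow_right₀ (by linarith) this
    obtain ⟨s, hs1, hs2⟩ := split_sum ((g:ℤ)^(N j)) (g^(a-1))
      (le_of_lt (pow_pos hgpos _)) l hsplit
    rw [hsum] at hs1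
    -- bound |s| ≤ g^(N j - 2)
    have hlb : (l.length : ℤ) ≤ g ^ (T - 1) := by
      have h2 : (T - 1 : ℕ) < 2 ^ (T - 1) := (Nat.lt_two_pow_self (n := _))
      have h3 : (2:ℤ) ^ (T-1) ≤ g ^ (T-1) := pow_le_pow_left₀ (by norm_num) hg _
      have : (l.length : ℤ) ≤ ((T:ℤ) - 1) := by
        have := hm; omega
      calc (l.length : ℤ) ≤ (T:ℤ) - 1 := this
        _ ≤ (2:ℤ) ^ (T-1) := le_of_lt (by
            have h4 : ((T:ℤ) - 1) = ((T - 1 : ℕ) : ℤ) := by rw [Nat.cast_sub hT1]; push_cast; ring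
            rw [h4]; exact_mod_cast (Nat.lt_two_pow_self (n := _)))
        _ ≤ g ^ (T-1) := h3
    have hsb : |s| ≤ g ^ (N j - 2) := by
      calc |s| ≤ (l.length : ℤ) * g ^ (a-1) := hs2
        _ ≤ g ^ (T-1) * g ^ (a-1) := by
            exact mul_le_mul_of_nonneg_right hlb (le_of_lt (pow_pos hgpos _))
        _ = g ^ (N j - 2) := by
            rw [← pow_add]
            congr 1
            have := hNlb j
            omega
    -- contradiction: g^(N j) ∣ r j - s and 0 < r j - s < g^(N j)
    have hdvd : (g:ℤ) ^ (N j) ∣ r j - s := by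
      have := dvd_sub hs1 (hmod j)
      have heq : (k - s) - (k - r j) = r j - s := by ring
      rwa [heq] at this
    have h0 : 0 < r j - s := by
      have := hrlb j
      have := abs_le.mp hsb
      omega
    have h1 : r j - s < g ^ (N j) := by
      have := hrub j
      have := abs_le.mp hsb
      omega
    have := Int.le_of_dvd h0 hdvd
    omega
  choose F hF1 hF2 using hP
  have key : ∀ j j' : Fin T, j < j' → F j ≠ F j' := by
    intro j j' hjj' heq
    have h1 : |l.get (F j)| < g ^ (N j) := hF2 j
    have h2 : g ^ (N j' - T) ≤ |l.get (F j')| := hF1 j'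
    rw [heq] at h1
    have hle : N j ≤ N j' - T := by have := hNgap j j' hjj'; omega
    have : (g:ℤ) ^ (N j) ≤ g ^ (N j' - T) := pow_le_pow_right₀ (by linarith) hle
    linarith
  have hinj : Function.Injective F := by
    intro j j' h
    rcases lt_trichotomy j j' with h' | h' | h'
    · exact absurd h (key _ _ h')
    · exact h'
    · exact absurd h.symm (key _ _ h')
  have := Fintype.card_le_of_injective F hinj
  simp only [Fintype.card_fin] at this
  omega

/-- Multiplication by a prime `p` coprime to `g` is not proper for `d_g`. -/
theorem stmt_7 (g : ℤ) (hg : 2 ≤ g) (p : ℕ) (hp : p.Prime)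
    (hcop : IsCoprime (p : ℤ) g) :
    ¬ ∀ B : Set ℤ, DgBounded g B → DgBounded g ((fun k : ℤ => (p : ℤ) * k) ⁻¹' B) := by
  intro H
  have hp2 : 2 ≤ p := hp.two_le
  haveI : Fact p.Prime := ⟨hp⟩
  set d : ℕ := p - 1 with hd
  have hd1 : 1 ≤ d := by omega
  -- p divides g^d - 1
  have hgz : (g : ZMod p) ≠ 0 := by
    intro h
    have hdvd : (p : ℤ) ∣ g := by
      rwa [ZMod.intCast_zmod_eq_zero_iff_dvd] at h
    have := hcop.isUnit_of_dvd' dvd_rfl hdvd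
    rw [Int.isUnit_iff] at this
    omega
  have hdvd : (p : ℤ) ∣ g ^ d - 1 := by
    have h1 : (g : ZMod p) ^ d = 1 := ZMod.pow_card_sub_one_eq_one hgz
    have : ((g ^ d - 1 : ℤ) : ZMod p) = 0 := by push_cast [h1]; ring
    rwa [ZMod.intCast_zmod_eq_zero_iff_dvd] at this
  obtain ⟨c, hc⟩ := hdvd
  set t : ℕ := (p + 1) / 2 with ht
  have ht1 : 1 ≤ t := by omega
  have h2t : (p : ℤ) ≤ 2 * t := by
    have : p ≤ 2 * t := by omega
    exact_mod_cast this
  have h4t : 4 * (t : ℤ) ≤ 3 * p := by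
    have : 4 * t ≤ 3 * p := by omega
    exact_mod_cast this
  have hgpos : (0:ℤ) < g := by linarith
  have hppos : (0:ℤ) < (p:ℤ) := by exact_mod_cast hp.pos
  set K : ℕ → ℤ := fun n => (t : ℤ) * c * ∑ i ∈ Finset.range n, (g ^ d) ^ i with hK
  have hpk : ∀ m : ℕ, (p : ℤ) * K m = (t : ℤ) * ((g ^ d) ^ m - 1) := by
    intro m
    have hgs := geom_sum_mul (g ^ d) m
    calc (p:ℤ) * K m = (t:ℤ) * ((∑ i ∈ Finset.range m, (g^d)^i) * ((p:ℤ) * c)) := by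
          rw [hK]; ring
      _ = (t:ℤ) * ((∑ i ∈ Finset.range m, (g^d)^i) * (g^d - 1)) := by rw [← hc]
      _ = (t:ℤ) * ((g^d)^m - 1) := by rw [hgs]
  set B : Set ℤ := Set.range (fun n : ℕ => (p : ℤ) * K n) with hB
  have hBbd : DgBounded g B := by
    refine ⟨2 * t, ?_⟩
    rintro x ⟨n, rfl⟩ y ⟨m, rfl⟩
    have hval : (p:ℤ) * K n - (p:ℤ) * K m = (t:ℤ) * g^(d*n) - (t:ℤ) * g^(d*m) := by
      rw [hpk, hpk, pow_mul, pow_mul]; ring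
    set L : List ℤ := List.replicate t (g ^ (d*n)) ++ List.replicate t (-(g ^ (d*m))) with hL
    have hmem : ∀ x ∈ L, x ∈ Sg g := by
      intro x hx
      rw [hL, List.mem_append] at hx
      rcases hx with hx | hx
      · rw [List.eq_of_mem_replicate hx]; exact ⟨d*n, Or.inl rfl⟩
      · rw [List.eq_of_mem_replicate hx]; exact ⟨d*m, Or.inr rfl⟩
    have hsum : L.sum = (p:ℤ) * K n - (p:ℤ) * K m := by
      rw [hL, List.sum_append, List.sum_replicate, List.sum_replicate, hval]
      push_cast [nsmul_eq_mul]
      ring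
    have := wlen_le g _ L hmem hsum
    have hlen : L.length = 2 * t := by simp [hL]; ring
    simpa [dg, hlen] using this
  obtain ⟨C, hC⟩ := H B hBbd
  set T : ℕ := C + 1 with hT
  set M : Fin T → ℕ := fun j => (T + 1) * ((j : ℕ) + 1) with hM
  set n : ℕ := (T + 1) * (T + 1) with hn
  set N : Fin T → ℕ := fun j => d * M j with hN
  set r : Fin T → ℤ := fun j => K (M j) with hr
  -- middle bounds for r j
  have hprj : ∀ j : Fin T, (p:ℤ) * r j = (t:ℤ) * (g ^ (N j) - 1) := by
    intro j
    have h0 := hpk (M j)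
    have h1 : (g ^ d) ^ (M j) = g ^ (N j) := by rw [hN]; exact (pow_mul g d (M j)).symm
    rw [hr]
    simp only []
    rw [h0, h1]
  have hNj2 : ∀ j : Fin T, T + 1 ≤ N j ∧ 2 ≤ N j := by
    intro j
    have h1 : T + 1 ≤ M j := by
      have : 0 < (j:ℕ) + 1 := by omega
      calc T + 1 ≤ (T+1) * ((j:ℕ)+1) := Nat.le_mul_of_pos_right _ this
        _ = M j := rfl
    have h2 : M j ≤ d * M j := Nat.le_mul_of_pos_left _ (by omega)
    constructor
    · calc T + 1 ≤ M j := h1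
        _ ≤ d * M j := h2
        _ = N j := rfl
    · have : T + 1 ≤ N j := by
        calc T + 1 ≤ M j := h1
          _ ≤ d * M j := h2
          _ = N j := rfl
      omega
  have hmid : ∀ j : Fin T, g ^ (N j - 2) < r j ∧ r j + g ^ (N j - 2) < g ^ (N j) := by
    intro j
    have h2 : 2 ≤ N j := (hNj2 j).2
    set n2 : ℕ := N j - 2 with hn2
    have hNeq : N j = n2 + 2 := by omega
    have hpow : (g:ℤ) ^ (N j) = g ^ n2 * g ^ 2 := by rw [hNeq, pow_add]
    have hprj' := hprj j
    have hn2pos : (1:ℤ) ≤ g ^ n2 := one_le_pow₀ (by linarith)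
    have hg2 : (4:ℤ) ≤ g ^ 2 := by nlinarith
    have hgN1 : (1:ℤ) ≤ g ^ (N j) := one_le_pow₀ (by linarith)
    -- 2 * r j ≥ g^(N j) - 1
    have hlow : g ^ (N j) - 1 ≤ 2 * r j := by
      have hmul : (p:ℤ) * (g ^ (N j) - 1) ≤ (p:ℤ) * (2 * r j) := by
        calc (p:ℤ) * (g ^ (N j) - 1) ≤ 2 * (t:ℤ) * (g ^ (N j) - 1) := by nlinarith
          _ = 2 * ((p:ℤ) * r j) := by rw [hprj']; ring
          _ = (p:ℤ) * (2 * r j) := by ring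
      exact le_of_mul_le_mul_left hmul hppos
    -- 4 * r j ≤ 3 * (g^(N j) - 1)
    have hhigh : 4 * r j ≤ 3 * (g ^ (N j) - 1) := by
      have hmul : (p:ℤ) * (4 * r j) ≤ (p:ℤ) * (3 * (g ^ (N j) - 1)) := by
        calc (p:ℤ) * (4 * r j) = 4 * ((p:ℤ) * r j) := by ring
          _ = 4 * (t:ℤ) * (g ^ (N j) - 1) := by rw [hprj']; ring
          _ ≤ 3 * (p:ℤ) * (g ^ (N j) - 1) := by nlinarith
          _ = (p:ℤ) * (3 * (g ^ (N j) - 1)) := by ring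
      exact le_of_mul_le_mul_left hmul hppos
    constructor
    · nlinarith
    · nlinarith
  have hMn : ∀ j : Fin T, M j ≤ n := by
    intro j
    have : (j:ℕ) + 1 ≤ T + 1 := by omega
    exact Nat.mul_le_mul_left _ this
  have hmod : ∀ j : Fin T, (g:ℤ) ^ (N j) ∣ K n - r j := by
    intro j
    have hsub : K n - r j = (t:ℤ) * c * ∑ i ∈ Finset.Ico (M j) n, (g ^ d) ^ i := by
      rw [hr, hK]
      simp only []
      rw [Finset.sum_Ico_eq_sub _ (hMn j)]
      ring
    rw [hsub]
    have hdvd : (g:ℤ) ^ (N j) ∣ ∑ i ∈ Finset.Ico (M j) n, (g ^ d) ^ i := by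
      apply Finset.dvd_sum
      intro i hi
      have h1 : (g ^ d) ^ (M j) ∣ (g ^ d) ^ i := pow_dvd_pow _ (Finset.mem_Ico.mp hi).1
      have h2 : (g ^ d) ^ (M j) = (g:ℤ) ^ (N j) := by rw [hN]; exact (pow_mul g d (M j)).symm
      rwa [h2] at h1
    exact hdvd.mul_left _
  have hNlb : ∀ j : Fin T, T + 1 ≤ N j := fun j => (hNj2 j).1
  have hNgap : ∀ j j' : Fin T, j < j' → N j + T ≤ N j' := by
    intro j j' hjj'
    have hj : (j:ℕ) + 1 ≤ (j':ℕ) := hjj'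
    have h1 : M j + (T + 1) ≤ M j' := by
      have : (T+1) * ((j:ℕ)+1) + (T+1) * 1 ≤ (T+1) * ((j':ℕ)+1) := by
        rw [← Nat.mul_add]
        exact Nat.mul_le_mul_left _ (by omega)
      simpa using this
    have h2 : d * (M j + (T+1)) ≤ d * M j' := Nat.mul_le_mul_left _ h1
    have h3 : d * M j + d * (T+1) = d * (M j + (T+1)) := by ring
    have h4 : T + 1 ≤ d * (T+1) := Nat.le_mul_of_pos_left _ (by omega)
    calc N j + T ≤ d * M j + d * (T+1) := by
          have : N j = d * M j := rfl
          omega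
      _ = d * (M j + (T+1)) := h3
      _ ≤ d * M j' := h2
      _ = N j' := rfl
  have hrlb : ∀ j : Fin T, g ^ (N j - 2) < r j := fun j => (hmid j).1
  have hrub : ∀ j : Fin T, r j + g ^ (N j - 2) < g ^ (N j) := fun j => (hmid j).2
  have hTle : T ≤ wlen g (K n) := wlen_lb g hg (K n) T N r hNlb hNgap hmod hrlb hrub
  have hmem1 : K n ∈ (fun k : ℤ => (p : ℤ) * k) ⁻¹' B := ⟨n, rfl⟩
  have hmem0 : (0:ℤ) ∈ (fun k : ℤ => (p : ℤ) * k) ⁻¹' B := by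
    refine ⟨0, ?_⟩
    simp [hK]
  have := hC (K n) hmem1 0 hmem0
  rw [dg, sub_zero] at this
  omega
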